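/- Fix real numbers α with 0 ≤ α < 1, M ≥ 1, and s ∈ ℝ. There exist c > 0 and l₀ ∈ ℕ such that for every natural number l ≥ l₀ and every natural number m with l + m even and l − (M+1)·l^{1−α} ≤ m ≤ l − M·l^{1−α}, one has (1 − m²/(l(l+1)))^s · A(l, m) ≥ c·l^{α·(1/4 − s)}. (Note that m ≤ l guarantees 1 − m²/(l(l+1)) > 0, so the real power is well defined.) -/

import Mathlib

/-- For `l, m : ℕ` with `m ≤ l` and `l + m` even, `sphA l m` is the modulus of the value of the
`L²`-normalized spherical harmonic `Y_l^m` on `S²` at the equator: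
`A(l, m) = (1 / (2^l ((l−m)/2)! ((l+m)/2)!)) √((l−m)! (l+m)! (2l+1) / (4π))`. -/
noncomputable def sphA (l m : ℕ) : ℝ :=
  (1 / ((2 : ℝ) ^ l * (Nat.factorial ((l - m) / 2) : ℝ) * (Nat.factorial ((l + m) / 2) : ℝ))) *
    Real.sqrt (((Nat.factorial (l - m) : ℝ) * (Nat.factorial (l + m) : ℝ) * (2 * l + 1)) /
      (4 * Real.pi))


open Filter Real

lemma binom_lower : ∃ c > (0:ℝ), ∃ N : ℕ, 1 ≤ N ∧ ∀ n : ℕ, N ≤ n →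
    c * 4 ^ n ≤ ((2*n).choose n : ℝ) * Real.sqrt n := by
  have hsp : (0:ℝ) < Real.sqrt π := Real.sqrt_pos.mpr Real.pi_pos
  obtain ⟨N₀, hN₀⟩ := Metric.tendsto_atTop.mp Stirling.tendsto_stirlingSeq_sqrt_pi
    (Real.sqrt π / 2) (by positivity)
  refine ⟨2 / (9 * Real.sqrt π), by positivity, max N₀ 1, le_max_right _ _, fun n hn => ?_⟩
  have hn1 : 1 ≤ n := le_trans (le_max_right _ _) hn
  have hnn : N₀ ≤ n := le_trans (le_max_left _ _) hn
  have hx : (0:ℝ) < n := by exact_mod_cast hn1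
  set a := Stirling.stirlingSeq (2*n) with ha
  set b := Stirling.stirlingSeq n with hb
  have hba : dist a (Real.sqrt π) < Real.sqrt π / 2 := hN₀ (2*n) (by omega)
  have hbb : dist b (Real.sqrt π) < Real.sqrt π / 2 := hN₀ n hnn
  rw [Real.dist_eq, abs_lt] at hba hbb
  have ha' : Real.sqrt π / 2 ≤ a := by linarith
  have hb' : b ≤ 3 * Real.sqrt π / 2 := by linarith
  have hb0 : 0 < b := by linarith
  set s := Real.sqrt n with hs
  have hs0 : 0 < s := Real.sqrt_pos.mpr hx
  set p := ((n:ℝ) / Real.exp 1) ^ n with hp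
  have hp0 : 0 < p := by positivity
  have hsqrt2n : Real.sqrt (2*(n:ℝ)) = Real.sqrt 2 * s := Real.sqrt_mul (by norm_num) _
  have hfn : (n.factorial : ℝ) = b * (Real.sqrt 2 * s * p) := by
    rw [hb, Stirling.stirlingSeq, hsqrt2n]
    exact (div_mul_cancel₀ _ (by positivity)).symm
  have hf2n : (((2*n).factorial) : ℝ) = a * (2 * s * (4 ^ n * p ^ 2)) := by
    rw [ha, Stirling.stirlingSeq]
    have h1 : Real.sqrt (2 * ((2*n : ℕ):ℝ)) = 2 * s := by
      push_cast
      rw [show 2 * (2*(n:ℝ)) = 4 * n by ring, show (4:ℝ) = 2^2 by norm_num,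
        Real.sqrt_mul (by positivity), Real.sqrt_sq (by norm_num)]
    have h2 : (((2*n : ℕ):ℝ) / Real.exp 1) ^ (2*n) = 4 ^ n * p ^ 2 := by
      push_cast
      rw [show 2 * (n:ℝ) / Real.exp 1 = 2 * ((n:ℝ)/Real.exp 1) by ring, mul_pow, hp, ← pow_mul,
        mul_comm n 2, pow_mul (2:ℝ) 2 n]
      norm_num
    rw [h1, h2]
    exact (div_mul_cancel₀ _ (by positivity)).symm
  have hcc : (((2*n).choose n : ℕ) : ℝ) * (n.factorial : ℝ) * (n.factorial : ℝ) = (((2*n).factorial) : ℝ) := by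
    exact_mod_cast congrArg (Nat.cast : ℕ → ℝ)
      (by simpa [two_mul, Nat.add_sub_cancel] using
        Nat.choose_mul_factorial_mul_factorial (show n ≤ 2*n by omega))
  set C := (((2*n).choose n : ℕ) : ℝ) with hC
  have hC0 : 0 ≤ C := by positivity
  rw [hfn, hf2n] at hcc
  have h2s : Real.sqrt 2 * Real.sqrt 2 = 2 := Real.mul_self_sqrt (by norm_num)
  have hkey : C * b ^ 2 * s = a * 4 ^ n := by
    have hup : C * b ^ 2 * s * (2*s*p^2) = a * 4 ^ n * (2*s*p^2) := by
      linear_combination hcc - C * b^2 * s^2 * p^2 * h2s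
    exact mul_right_cancel₀ (by positivity) hup
  have h4 : (0:ℝ) < 4 ^ n := by positivity
  have h3 : (Real.sqrt π / 2) * 4 ^ n ≤ C * s * (9 * Real.sqrt π ^ 2 / 4) := by
    have e1 : (Real.sqrt π / 2) * 4 ^ n ≤ a * 4 ^ n :=
      mul_le_mul_of_nonneg_right ha' h4.le
    have e2 : C * b ^ 2 * s ≤ C * s * (9 * Real.sqrt π ^ 2 / 4) := by
      have hb2 : b ^ 2 ≤ 9 * Real.sqrt π ^ 2 / 4 := by nlinarith
      have : 0 ≤ C * s := by positivity
      nlinarith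
    calc (Real.sqrt π / 2) * 4 ^ n ≤ a * 4 ^ n := e1
      _ = C * b ^ 2 * s := hkey.symm
      _ ≤ C * s * (9 * Real.sqrt π ^ 2 / 4) := e2
  have h5 : (Real.sqrt π / 2) * 4 ^ n / (9 * Real.sqrt π ^ 2 / 4) ≤ C * s :=
    (div_le_iff₀ (by positivity)).mpr h3
  calc 2 / (9 * Real.sqrt π) * 4 ^ n
      = (Real.sqrt π / 2) * 4 ^ n / (9 * Real.sqrt π ^ 2 / 4) := by
        field_simp
        ring
    _ ≤ C * s := h5


lemma cast_choose_central (k : ℕ) :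
    (((2*k).choose k : ℕ) : ℝ) * (k.factorial : ℝ) * (k.factorial : ℝ)
      = ((2*k).factorial : ℝ) := by
  have h := Nat.choose_mul_factorial_mul_factorial (show k ≤ 2*k by omega)
  have e : 2*k - k = k := by omega
  rw [e] at h
  exact_mod_cast congrArg (Nat.cast : ℕ → ℝ) h

lemma sphA_eq (l m k : ℕ) (h1 : l - m = 2*k) (h2 : l + m = 2*(l-k)) :
    sphA l m = Real.sqrt ((((2*k).choose k : ℝ) * (((2*(l-k)).choose (l-k)) : ℝ)
      * (2*(l:ℝ)+1)) / (4 * Real.pi * 4 ^ l)) := by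
  have hc1 := cast_choose_central k
  have hc2 := cast_choose_central (l-k)
  have hfk : (0:ℝ) < (k.factorial : ℝ) := by exact_mod_cast k.factorial_pos
  have hflk : (0:ℝ) < ((l-k).factorial : ℝ) := by exact_mod_cast (l-k).factorial_pos
  have hQ : (((2*k).choose k : ℝ) * (((2*(l-k)).choose (l-k)) : ℝ) * (2*(l:ℝ)+1))
        / (4 * Real.pi * 4 ^ l)
      = (1 / ((2:ℝ)^l * (k.factorial : ℝ) * ((l-k).factorial : ℝ)))^2 *
        (((2*k).factorial : ℝ) * ((2*(l-k)).factorial : ℝ) * (2*(l:ℝ)+1) / (4*Real.pi)) := by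
    have h4l : (4:ℝ)^l = ((2:ℝ)^l)^2 := by
      rw [← pow_mul, mul_comm, pow_mul]; norm_num
    rw [h4l, ← hc1, ← hc2]
    have h2l : ((2:ℝ)^l) ≠ 0 := by positivity
    field_simp
  rw [sphA, h1, h2, Nat.mul_div_cancel_left _ (by norm_num : 0 < 2),
    Nat.mul_div_cancel_left _ (by norm_num : 0 < 2), hQ,
    Real.sqrt_mul (sq_nonneg _), Real.sqrt_sq (by positivity)]

lemma rpow_sq {x : ℝ} (hx : 0 ≤ x) (a : ℝ) : (x ^ a) ^ 2 = x ^ (a * 2) := by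
  rw [← Real.rpow_natCast (x ^ a) 2, ← Real.rpow_mul hx]
  norm_num


lemma wlb_aux (M u L mm : ℝ) (hM : 1 ≤ M) (hu : 0 < u) (hL : 1 ≤ L) (hm0 : 0 ≤ mm)
    (h1 : M * (u*L) ≤ L - mm) : M/2 * u * (L*(L+1)) ≤ L*(L+1) - mm^2 := by
  have hMuL : 0 ≤ M * (u*L) := by positivity
  have A : M*(u*L)*L ≤ (L-mm)*(L+mm) :=
    mul_le_mul h1 (by linarith) (by linarith) (by linarith)
  have B : 0 ≤ (M*(u*L))*(L-1) := mul_nonneg hMuL (by linarith)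
  nlinarith [A, B]

lemma wub_aux (M u L mm : ℝ) (hM : 1 ≤ M) (hu : 0 < u) (hL : 1 ≤ L) (hm0 : 0 ≤ mm)
    (h1 : L - mm ≤ (M+1) * (u*L)) (h2 : mm ≤ L) (h3 : 1 ≤ u*L) :
    L*(L+1) - mm^2 ≤ (2*M+3) * u * (L*(L+1)) := by
  have A : (L-mm)*(L+mm) ≤ ((M+1)*(u*L))*(2*L) :=
    mul_le_mul h1 (by linarith) (by linarith) (by positivity)
  have B : L ≤ u*L*L := by
    have := mul_le_mul_of_nonneg_right h3 (by linarith : (0:ℝ) ≤ L)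
    linarith
  have C : 0 ≤ (2*M+3)*u*L := by positivity
  nlinarith [A, B, C]

set_option maxHeartbeats 1000000 in
/-- Fix `0 ≤ α < 1`, `M ≥ 1` and `s ∈ ℝ`. There exist `c > 0` and `l₀` such that for all
`l ≥ l₀` and all `m` with `l + m` even and `l − (M+1)·l^(1−α) ≤ m ≤ l − M·l^(1−α)`, one has
`(1 − m²/(l(l+1)))^s · A(l, m) ≥ c · l^(α(1/4 − s))`. -/
theorem stmt11 (α M s : ℝ) (hα0 : 0 ≤ α) (hα1 : α < 1) (hM : 1 ≤ M) :
    ∃ c > (0 : ℝ), ∃ l₀ : ℕ, ∀ l : ℕ, l₀ ≤ l → ∀ m : ℕ, Even (l + m) →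
      (l : ℝ) - (M + 1) * (l : ℝ) ^ (1 - α) ≤ (m : ℝ) →
      (m : ℝ) ≤ (l : ℝ) - M * (l : ℝ) ^ (1 - α) →
      c * (l : ℝ) ^ (α * (1 / 4 - s)) ≤
        (1 - (m : ℝ) ^ 2 / ((l : ℝ) * ((l : ℝ) + 1))) ^ s * sphA l m := by
  obtain ⟨c₁, hc₁, N, hN1, hbin⟩ := binom_lower
  have hπ := Real.pi_pos
  have hM2 : (0:ℝ) < (M+1)/2 := by linarith
  set β : ℝ := ((M+1)/2) ^ (-(1/4) : ℝ) with hβ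
  have hβ0 : 0 < β := Real.rpow_pos_of_pos hM2 _
  set cA : ℝ := Real.sqrt (c₁^2/(4*Real.pi)) * β with hcA
  have hcA0 : 0 < cA := mul_pos (Real.sqrt_pos.mpr (by positivity)) hβ0
  set cw : ℝ := min ((M/2) ^ s) ((2*M+3) ^ s) with hcw
  have hcw0 : 0 < cw := lt_min (Real.rpow_pos_of_pos (by linarith) _)
    (Real.rpow_pos_of_pos (by linarith) _)
  refine ⟨cw * cA, mul_pos hcw0 hcA0, ?_⟩
  have h1α : (0:ℝ) < 1 - α := by linarith
  have htd : Tendsto (fun l : ℕ => (l:ℝ) ^ (1-α)) atTop atTop :=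
    (tendsto_rpow_atTop h1α).comp tendsto_natCast_atTop_atTop
  have hev : ∀ᶠ l : ℕ in atTop,
      ((2*(N:ℝ)+2) ≤ (l:ℝ) ^ (1-α) ∧ (2*(N:ℝ)+2) ≤ (l:ℝ)) :=
    (htd.eventually_ge_atTop _).and (tendsto_natCast_atTop_atTop.eventually_ge_atTop _)
  obtain ⟨l₀, hl₀⟩ := eventually_atTop.mp hev
  refine ⟨l₀, fun l hl m hEven hm1 hm2 => ?_⟩
  obtain ⟨hLrp, hLlin⟩ := hl₀ l hl
  have hN0 : (1:ℝ) ≤ (N:ℝ) := by exact_mod_cast hN1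
  have hL1 : (1:ℝ) ≤ (l:ℝ) := by linarith
  have hl0 : (0:ℝ) < (l:ℝ) := by linarith
  have hrp0 : (0:ℝ) < (l:ℝ) ^ (1-α) := Real.rpow_pos_of_pos hl0 _
  have hrp1 : (1:ℝ) ≤ (l:ℝ) ^ (1-α) := by linarith
  have hm0 : (0:ℝ) ≤ (m:ℝ) := Nat.cast_nonneg m
  have hMrp : (l:ℝ)^(1-α) ≤ M * (l:ℝ)^(1-α) := le_mul_of_one_le_left hrp0.le hM
  have hml : m ≤ l := by
    have h' : (m:ℝ) ≤ (l:ℝ) := by linarith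
    exact_mod_cast h'
  have hEsub : Even (l - m) := (Nat.even_sub hml).mpr (Nat.even_add.mp hEven)
  obtain ⟨t, ht⟩ := hEsub
  set k := (l - m) / 2 with hkdef
  have h2k : l - m = 2 * k := by omega
  have hkl : k ≤ l := by omega
  have hlmk : l + m = 2 * (l - k) := by omega
  have hcast1 : 2*(k:ℝ) = (l:ℝ) - (m:ℝ) := by
    have h := congrArg (Nat.cast : ℕ → ℝ) h2k
    rw [Nat.cast_sub hml] at h
    push_cast at h
    linarith
  have hcast2 : ((l - k : ℕ):ℝ) = (l:ℝ) - (k:ℝ) := by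
    rw [Nat.cast_sub hkl]
  have hkub : (k:ℝ) ≤ (M+1)/2 * (l:ℝ)^(1-α) := by linarith
  have hklb : M/2 * (l:ℝ)^(1-α) ≤ (k:ℝ) := by linarith
  have hkN : N ≤ k := by
    have h' : (N:ℝ) ≤ (k:ℝ) := by linarith
    exact_mod_cast h'
  have hlkN : N ≤ l - k := by
    have h' : (N:ℝ) ≤ ((l - k : ℕ):ℝ) := by rw [hcast2]; linarith
    exact_mod_cast h'
  have hkpos : (0:ℝ) < (k:ℝ) := by linarith
  have hlkpos : (0:ℝ) < ((l - k : ℕ):ℝ) := by rw [hcast2]; linarith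
  -- notation
  set L : ℝ := (l:ℝ) with hL
  -- weight bounds
  have hLsplit : L ^ (1-α) = L ^ (-α) * L := by
    rw [← Real.rpow_add_one hl0.ne' (-α)]
    congr 1
    ring
  have hu0 : (0:ℝ) < L ^ (-α) := Real.rpow_pos_of_pos hl0 _
  set w : ℝ := 1 - (m:ℝ)^2 / (L * (L+1)) with hw
  have hLL : (0:ℝ) < L * (L+1) := mul_pos hl0 (by linarith)
  have hwE : w = (L*(L+1) - (m:ℝ)^2)/(L*(L+1)) := by
    rw [hw]; field_simp
  have hmL : (m:ℝ) ≤ L := by linarith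
  have hw_lb : M/2 * L^(-α) ≤ w := by
    rw [hwE, le_div_iff₀ hLL]
    have hp1 : M * (L^(-α) * L) ≤ L - (m:ℝ) := by rw [← hLsplit]; linarith
    exact wlb_aux M (L^(-α)) L (m:ℝ) hM hu0 hL1 hm0 hp1
  have hw_ub : w ≤ (2*M+3) * L^(-α) := by
    rw [hwE, div_le_iff₀ hLL]
    have hp1 : L - (m:ℝ) ≤ (M+1) * (L^(-α) * L) := by rw [← hLsplit]; linarith
    have hq1 : 1 ≤ L^(-α) * L := by rw [← hLsplit]; exact hrp1
    exact wub_aux M (L^(-α)) L (m:ℝ) hM hu0 hL1 hm0 hp1 hmL hq1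
  have hw0 : 0 < w := lt_of_lt_of_le (by positivity) hw_lb
  -- weight rpow bound
  have hwst : cw * L ^ (-(α*s)) ≤ w ^ s := by
    have hexp : L ^ ((-α)*s) = L ^ (-(α*s)) := by congr 1; ring
    rcases le_or_gt 0 s with hs | hs
    · have h1 : ((M/2) * L^(-α)) ^ s ≤ w ^ s :=
        Real.rpow_le_rpow (by positivity) hw_lb hs
      rw [Real.mul_rpow (by positivity) (by positivity), ← Real.rpow_mul hl0.le, hexp] at h1
      calc cw * L ^ (-(α*s)) ≤ (M/2)^s * L ^ (-(α*s)) :=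
            mul_le_mul_of_nonneg_right (min_le_left _ _) (by positivity)
        _ ≤ w ^ s := h1
    · have h1 : ((2*M+3) * L^(-α)) ^ s ≤ w ^ s :=
        Real.rpow_le_rpow_of_nonpos (by positivity) hw_ub hs.le
      rw [Real.mul_rpow (by positivity) (by positivity), ← Real.rpow_mul hl0.le, hexp] at h1
      calc cw * L ^ (-(α*s)) ≤ (2*M+3)^s * L ^ (-(α*s)) :=
            mul_le_mul_of_nonneg_right (min_le_right _ _) (by positivity)
        _ ≤ w ^ s := h1
  -- sphA bound
  have hb1 := hbin k hkN
  have hb2 := hbin (l-k) hlkN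
  have hsk : 0 < Real.sqrt k := Real.sqrt_pos.mpr hkpos
  have hsl : 0 < Real.sqrt ((l - k : ℕ):ℝ) := Real.sqrt_pos.mpr hlkpos
  have hsL : 0 < Real.sqrt L := Real.sqrt_pos.mpr hl0
  have hX : (0:ℝ) < ((2*k).choose k : ℝ) := by
    exact_mod_cast Nat.choose_pos (show k ≤ 2*k by omega)
  have hY : (0:ℝ) < ((2*(l-k)).choose (l-k) : ℝ) := by
    exact_mod_cast Nat.choose_pos (show l-k ≤ 2*(l-k) by omega)
  have hkR4 : (4:ℝ)^k * 4^(l-k) = 4^l := by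
    rw [← pow_add]
    congr 1
    omega
  set Q : ℝ := (((2*k).choose k : ℝ) * (((2*(l-k)).choose (l-k)) : ℝ) * (2*L+1))
      / (4 * Real.pi * 4 ^ l) with hQdef
  have hslL : Real.sqrt ((l - k : ℕ):ℝ) ≤ Real.sqrt L :=
    Real.sqrt_le_sqrt (by rw [hcast2]; linarith)
  have hT : c₁^2/(4*Real.pi) * (Real.sqrt L / Real.sqrt k) ≤ Q := by
    rw [hQdef, le_div_iff₀ (by positivity)]
    rw [show c₁^2/(4*Real.pi) * (Real.sqrt L / Real.sqrt k) * (4*Real.pi*4^l)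
        = (c₁^2 * 4^l) * Real.sqrt L / Real.sqrt k by field_simp]
    rw [div_le_iff₀ hsk]
    have m1 : c₁^2 * 4^l * Real.sqrt L
        ≤ (((2*k).choose k : ℝ) * Real.sqrt k) *
          ((((2*(l-k)).choose (l-k)) : ℝ) * Real.sqrt ((l - k : ℕ):ℝ)) * Real.sqrt L := by
      have h := mul_le_mul hb1 hb2 (by positivity) (by positivity)
      have e : c₁ * 4^k * (c₁ * 4^(l-k)) = c₁^2 * 4^l := by rw [← hkR4]; ring
      rw [e] at h
      exact mul_le_mul_of_nonneg_right h hsL.le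
    have m2 : (((2*k).choose k : ℝ) * Real.sqrt k) *
          ((((2*(l-k)).choose (l-k)) : ℝ) * Real.sqrt ((l - k : ℕ):ℝ)) * Real.sqrt L
        ≤ ((2*k).choose k : ℝ) * (((2*(l-k)).choose (l-k)) : ℝ) * (2*L+1) * Real.sqrt k := by
      have hLsq : Real.sqrt L * Real.sqrt L = L := Real.mul_self_sqrt hl0.le
      have hprod : Real.sqrt ((l - k : ℕ):ℝ) * Real.sqrt L ≤ 2*L+1 := by
        have h := mul_le_mul_of_nonneg_right hslL hsL.le
        rw [hLsq] at h
        linarith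
      calc (((2*k).choose k : ℝ) * Real.sqrt k) *
            ((((2*(l-k)).choose (l-k)) : ℝ) * Real.sqrt ((l - k : ℕ):ℝ)) * Real.sqrt L
          = (((2*k).choose k : ℝ) * (((2*(l-k)).choose (l-k)) : ℝ) * Real.sqrt k)
            * (Real.sqrt ((l - k : ℕ):ℝ) * Real.sqrt L) := by ring
        _ ≤ (((2*k).choose k : ℝ) * (((2*(l-k)).choose (l-k)) : ℝ) * Real.sqrt k) * (2*L+1) := by
            apply mul_le_mul_of_nonneg_left hprod (by positivity)
        _ = ((2*k).choose k : ℝ) * (((2*(l-k)).choose (l-k)) : ℝ) * (2*L+1) * Real.sqrt k := by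
            ring
    linarith
  have hQ0 : 0 ≤ Q := by positivity
  have hAlow : cA * L ^ (α/4 : ℝ) ≤ sphA l m := by
    rw [sphA_eq l m k h2k hlmk, ← hL, ← hQdef]
    rw [Real.le_sqrt (by positivity) hQ0]
    have hsq : (cA * L ^ (α/4 : ℝ))^2
        = c₁^2/(4*Real.pi) * (((M+1)/2) ^ (-(1/2) : ℝ) * L ^ (α/2 : ℝ)) := by
      rw [hcA, mul_pow, mul_pow, Real.sq_sqrt (by positivity), hβ,
        rpow_sq hM2.le, rpow_sq hl0.le]
      rw [show (-(1/4) : ℝ) * 2 = -(1/2) by norm_num, show (α/4) * 2 = α/2 by ring]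
      ring
    rw [hsq]
    have h7 : ((M+1)/2) ^ (-(1/2) : ℝ) * L ^ (α/2 : ℝ) * Real.sqrt k ≤ Real.sqrt L := by
      have hskub : Real.sqrt k ≤ ((M+1)/2) ^ ((1:ℝ)/2) * L ^ ((1-α)*(1/2) : ℝ) := by
        have h := Real.sqrt_le_sqrt hkub
        rwa [Real.sqrt_mul hM2.le, Real.sqrt_eq_rpow ((M+1)/2), Real.sqrt_eq_rpow (L^(1-α)),
          ← Real.rpow_mul hl0.le] at h
      calc ((M+1)/2) ^ (-(1/2) : ℝ) * L ^ (α/2 : ℝ) * Real.sqrt k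
          ≤ ((M+1)/2) ^ (-(1/2) : ℝ) * L ^ (α/2 : ℝ) *
            (((M+1)/2) ^ ((1:ℝ)/2) * L ^ ((1-α)*(1/2) : ℝ)) := by
            apply mul_le_mul_of_nonneg_left hskub (by positivity)
        _ = (((M+1)/2) ^ (-(1/2) : ℝ) * ((M+1)/2) ^ ((1:ℝ)/2)) *
            (L ^ (α/2 : ℝ) * L ^ ((1-α)*(1/2) : ℝ)) := by ring
        _ = Real.sqrt L := by
            rw [← Real.rpow_add hM2, ← Real.rpow_add hl0,
              show (-(1/2) : ℝ) + 1/2 = 0 by norm_num,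
              show (α/2 : ℝ) + (1-α)*(1/2) = 1/2 by ring,
              Real.rpow_zero, one_mul, ← Real.sqrt_eq_rpow]
    calc c₁^2/(4*Real.pi) * (((M+1)/2) ^ (-(1/2) : ℝ) * L ^ (α/2 : ℝ))
        ≤ c₁^2/(4*Real.pi) * (Real.sqrt L / Real.sqrt k) := by
          apply mul_le_mul_of_nonneg_left _ (by positivity)
          rw [le_div_iff₀ hsk]
          exact h7
      _ ≤ Q := hT
  -- combine
  have hws0 : (0:ℝ) ≤ w ^ s := (Real.rpow_pos_of_pos hw0 s).le
  calc cw * cA * L ^ (α * (1/4 - s))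
      = (cw * L ^ (-(α*s))) * (cA * L ^ (α/4 : ℝ)) := by
        rw [show α * (1/4 - s) = -(α*s) + α/4 by ring, Real.rpow_add hl0]
        ring
    _ ≤ w ^ s * sphA l m := mul_le_mul hwst hAlow (by positivity) hws0
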